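/- Let n ≥ 1, y ∈ ℝⁿ, τ ∈ ℝⁿ with τ_i > 0, and λ ≥ 0. A vector u ∈ ℝⁿ minimizes F(·, y, τ, λ) if and only if there exists z ∈ ℝ^{n+1} with z_0 = z_n = 0 such that |z_k| ≤ λ/2 for all k ∈ {1,…,n−1}, z_k = (λ/2)·sign(u_{k+1} − u_k) whenever u_{k+1} ≠ u_k, and τ_i (u_i − y_i) = z_i − z_{i−1} for every i ∈ {1,…,n}. -/

import Mathlib

open Finset

section TVhelpers

private lemma quadA {a C δ : ℝ} (hC : 0 < C) (hδ : 0 < δ)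
    (h : ∀ t : ℝ, |t| < δ → 0 ≤ a * t + C * t ^ 2) : a = 0 := by
  by_contra ha
  have ha' : 0 < |a| := abs_pos.mpr ha
  set ε : ℝ := min (δ / (2 * |a|)) (1 / (2 * C)) with hε
  have hε0 : 0 < ε := lt_min (by positivity) (by positivity)
  have hεδ : ε ≤ δ / (2 * |a|) := min_le_left _ _
  have hεC : ε ≤ 1 / (2 * C) := min_le_right _ _
  have h1 : |(-a * ε)| < δ := by
    rw [abs_mul, abs_neg, abs_of_pos hε0]
    have : |a| * ε ≤ |a| * (δ / (2 * |a|)) := by nlinarith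
    have h2 : |a| * (δ / (2 * |a|)) = δ / 2 := by field_simp
    linarith
  have h2 := h (-a * ε) h1
  have hsq : (0:ℝ) < a ^ 2 := by positivity
  have hCε : C * ε ≤ 1 / 2 := by
    have : C * ε ≤ C * (1 / (2 * C)) := by nlinarith
    have h3 : C * (1 / (2 * C)) = 1 / 2 := by field_simp
    linarith
  nlinarith [mul_pos hsq hε0]

private lemma quadB {b C : ℝ} (hC : 0 < C)
    (h : ∀ t : ℝ, 0 < t → 0 ≤ b * t + C * t ^ 2) : 0 ≤ b := by
  by_contra hb
  push_neg at hb
  set s := -b / (2 * C) with hs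
  have ht : 0 < s := div_pos (by linarith) (by positivity)
  have h2 := h _ ht
  have hb' : b = -(2 * C * s) := by
    have : 2 * C * s = -b := by rw [hs]; field_simp
    linarith
  rw [hb'] at h2
  nlinarith [mul_pos hC (mul_pos ht ht)]

private lemma tv_sub {lam w d e : ℝ} (hlam : 0 ≤ lam) (hw : |w| ≤ lam / 2)
    (hsign : d ≠ 0 → w = lam / 2 * Real.sign d) :
    2 * w * (e - d) ≤ lam * |e| - lam * |d| := by
  rcases eq_or_ne d 0 with hd | hd
  · subst hd
    have h2 : w * e ≤ |w| * |e| := by rw [← abs_mul]; exact le_abs_self _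
    have h1 : |w| * |e| ≤ lam / 2 * |e| := by nlinarith [abs_nonneg e]
    simp only [abs_zero, sub_zero, mul_zero]
    nlinarith
  · have hs := hsign hd
    rcases lt_or_gt_of_ne hd with h | h
    · rw [Real.sign_of_neg h] at hs
      subst hs
      have he : -e ≤ |e| := neg_le_abs e
      have hda : |d| = -d := abs_of_neg h
      nlinarith [mul_nonneg hlam (by linarith : (0:ℝ) ≤ |e| + e)]
    · rw [Real.sign_of_pos h] at hs
      subst hs
      have he : e ≤ |e| := le_abs_self e
      have hda : |d| = d := abs_of_pos h
      nlinarith [mul_nonneg hlam (by linarith : (0:ℝ) ≤ |e| - e)]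

private lemma abel_id (Z H : ℕ → ℝ) (m : ℕ) :
    (∑ i ∈ range (m + 1), (Z (i + 1) - Z i) * H i)
      + ∑ k ∈ range m, Z (k + 1) * (H (k + 1) - H k)
      = Z (m + 1) * H m - Z 0 * H 0 := by
  induction m with
  | zero => simp; ring
  | succ m ih =>
      rw [Finset.sum_range_succ, Finset.sum_range_succ (f := fun k => Z (k + 1) * (H (k + 1) - H k))]
      linear_combination ih

private lemma abel_fin {n : ℕ} (z : Fin (n+2) → ℝ) (H : Fin (n+1) → ℝ)
    (hz0 : z 0 = 0) (hzl : z (Fin.last (n+1)) = 0) :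
    (∑ i : Fin (n+1), (z i.succ - z i.castSucc) * H i)
      + ∑ k : Fin n, z k.succ.castSucc * (H k.succ - H k.castSucc) = 0 := by
  classical
  set Zn : ℕ → ℝ := fun m => if h : m < n+2 then z ⟨m, h⟩ else 0 with hZn
  set Hn : ℕ → ℝ := fun m => if h : m < n+1 then H ⟨m, h⟩ else 0 with hHn
  have hZ : ∀ (m : ℕ) (h : m < n+2), Zn m = z ⟨m, h⟩ := by
    intro m h; rw [hZn]; simp only; rw [dif_pos h]
  have hH : ∀ (m : ℕ) (h : m < n+1), Hn m = H ⟨m, h⟩ := by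
    intro m h; rw [hHn]; simp only; rw [dif_pos h]
  have e1 : ∑ i : Fin (n+1), (z i.succ - z i.castSucc) * H i
      = ∑ i ∈ range (n+1), (Zn (i+1) - Zn i) * Hn i := by
    rw [← Fin.sum_univ_eq_sum_range (fun m => (Zn (m+1) - Zn m) * Hn m) (n+1)]
    refine Finset.sum_congr rfl fun i _ => ?_
    rw [hZ (i.val+1) (by omega), hZ i.val (by omega), hH i.val (by omega)]
    rfl
  have e2 : ∑ k : Fin n, z k.succ.castSucc * (H k.succ - H k.castSucc)
      = ∑ k ∈ range n, Zn (k+1) * (Hn (k+1) - Hn k) := by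
    rw [← Fin.sum_univ_eq_sum_range (fun m => Zn (m+1) * (Hn (m+1) - Hn m)) n]
    refine Finset.sum_congr rfl fun k _ => ?_
    rw [hZ (k.val+1) (by omega), hH (k.val+1) (by omega), hH k.val (by omega)]
    rfl
  rw [e1, e2, abel_id]
  rw [hZ (n+1) (by omega), hZ 0 (by omega)]
  have h1 : z (⟨n+1, by omega⟩ : Fin (n+2)) = 0 := hzl
  have h0 : z (⟨0, by omega⟩ : Fin (n+2)) = 0 := hz0
  rw [h1, h0]; ring

private lemma filter_succ_sum {n : ℕ} (f : Fin (n+1) → ℝ) (m : ℕ) (hm : m < n+1) :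
    ∑ i ∈ univ.filter (fun i : Fin (n+1) => (i:ℕ) < m + 1), f i
      = (∑ i ∈ univ.filter (fun i : Fin (n+1) => (i:ℕ) < m), f i) + f ⟨m, hm⟩ := by
  have hset : univ.filter (fun i : Fin (n+1) => (i:ℕ) < m + 1)
      = insert (⟨m, hm⟩ : Fin (n+1)) (univ.filter (fun i : Fin (n+1) => (i:ℕ) < m)) := by
    ext i
    simp only [mem_filter, mem_univ, true_and, mem_insert, Fin.ext_iff,
      Nat.lt_succ_iff_lt_or_eq]
    tauto
  rw [hset, Finset.sum_insert (by simp)]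
  ring

private lemma quad_pert {n : ℕ} (y τ u : Fin (n+1) → ℝ) (t : ℝ) (p : Fin (n+1) → Prop)
    [DecidablePred p] :
    ∑ i : Fin (n+1), τ i * (y i - (if p i then u i + t else u i)) ^ 2
      = (∑ i : Fin (n+1), τ i * (y i - u i) ^ 2)
        + (2 * t * ∑ i ∈ univ.filter p, τ i * (u i - y i)
            + t ^ 2 * ∑ i ∈ univ.filter p, τ i) := by
  have key : ∀ i : Fin (n+1), τ i * (y i - (if p i then u i + t else u i)) ^ 2
      = τ i * (y i - u i) ^ 2
        + (if p i then 2 * t * (τ i * (u i - y i)) + t ^ 2 * τ i else 0) := by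
    intro i; split_ifs <;> ring
  rw [Finset.sum_congr rfl (fun i _ => key i), Finset.sum_add_distrib,
    ← Finset.sum_filter, Finset.sum_add_distrib, ← Finset.mul_sum, ← Finset.mul_sum]

private lemma tv_pert {n : ℕ} (u : Fin (n+1) → ℝ) (t : ℝ) (k : Fin n) :
    ∑ j : Fin n, |(if ((j.succ : Fin (n+1)) : ℕ) < (k:ℕ)+1 then u j.succ + t else u j.succ)
        - (if ((j.castSucc : Fin (n+1)) : ℕ) < (k:ℕ)+1 then u j.castSucc + t else u j.castSucc)|
      = (∑ j : Fin n, |u j.succ - u j.castSucc|)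
        + (|u k.succ - u k.castSucc - t| - |u k.succ - u k.castSucc|) := by
  have key : ∀ j : Fin n,
      |(if ((j.succ : Fin (n+1)) : ℕ) < (k:ℕ)+1 then u j.succ + t else u j.succ)
        - (if ((j.castSucc : Fin (n+1)) : ℕ) < (k:ℕ)+1 then u j.castSucc + t else u j.castSucc)|
      = |u j.succ - u j.castSucc|
        + (if j = k then |u k.succ - u k.castSucc - t| - |u k.succ - u k.castSucc| else 0) := by
    intro j
    rw [Fin.val_succ, Fin.coe_castSucc]
    by_cases hjk : j = k
    · subst hjk
      rw [if_neg (by omega), if_pos (by omega), if_pos rfl]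
      have h1 : u j.succ - (u j.castSucc + t) = u j.succ - u j.castSucc - t := by ring
      rw [h1]; ring
    · have hne : (j:ℕ) ≠ (k:ℕ) := fun h => hjk (Fin.ext h)
      rw [if_neg hjk]
      by_cases hlt : (j:ℕ) < (k:ℕ)
      · rw [if_pos (by omega), if_pos (by omega)]
        have h1 : u j.succ + t - (u j.castSucc + t) = u j.succ - u j.castSucc := by ring
        rw [h1]; ring
      · rw [if_neg (by omega), if_neg (by omega)]
        ring
  rw [Finset.sum_congr rfl (fun j _ => key j), Finset.sum_add_distrib,
    Finset.sum_ite_eq' univ k, if_pos (mem_univ k)]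

end TVhelpers


/-- The weighted total-variation functional
`F(u, y, τ, λ) = Σ_{i=1}^n τ_i (y_i − u_i)² + λ Σ_{i=1}^{n−1} |u_{i+1} − u_i|`
for a signal with `n + 1` samples (indexed by `Fin (n+1)`, so that the number
of samples is an arbitrary integer `≥ 1`). -/
noncomputable def tvF (n : ℕ) (y τ : Fin (n + 1) → ℝ) (lam : ℝ)
    (u : Fin (n + 1) → ℝ) : ℝ :=
  (∑ i : Fin (n + 1), τ i * (y i - u i) ^ 2) +
    lam * ∑ i : Fin n, |u i.succ - u i.castSucc|

/-- Optimality characterization: `u` minimizes `F(·, y, τ, λ)` iff there is a dual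
vector `z` (with one entry per "position" `0, …, n+1`, the entry `z_{k+1}` being
attached to the adjacent pair `(k, k+1)` of sample indices) such that
`z_0 = z_{last} = 0`, `|z_k| ≤ λ/2` at every interior position,
`z_{k+1} = (λ/2)·sign(u_{k+1} − u_k)` whenever `u_{k+1} ≠ u_k`, and
`τ_i (u_i − y_i) = z_{i+1} − z_i` for every sample index `i`.
(`Real.sign x` is `1` for `x > 0`, `-1` for `x < 0` and `0` for `x = 0`.) -/
theorem tv_minimizer_iff_dual_certificate (n : ℕ) (y τ : Fin (n + 1) → ℝ)
    (hτ : ∀ i, 0 < τ i) (lam : ℝ) (hlam : 0 ≤ lam) (u : Fin (n + 1) → ℝ) :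
    (∀ v : Fin (n + 1) → ℝ, tvF n y τ lam u ≤ tvF n y τ lam v) ↔
      ∃ z : Fin (n + 2) → ℝ,
        z 0 = 0 ∧
        z (Fin.last (n + 1)) = 0 ∧
        (∀ k : Fin n, |z k.succ.castSucc| ≤ lam / 2) ∧
        (∀ k : Fin n, u k.succ ≠ u k.castSucc →
          z k.succ.castSucc = lam / 2 * Real.sign (u k.succ - u k.castSucc)) ∧
        (∀ i : Fin (n + 1), τ i * (u i - y i) = z i.succ - z i.castSucc) := by
  classical
  constructor
  · -- forward
    intro hmin
    set g : Fin (n+1) → ℝ := fun i => τ i * (u i - y i) with hg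
    set z : Fin (n+2) → ℝ :=
      fun j => ∑ i ∈ univ.filter (fun i : Fin (n+1) => (i:ℕ) < (j:ℕ)), g i with hz
    have hz0 : z 0 = 0 := by
      rw [hz]; simp
    have hzval : ∀ j : Fin (n+2),
        z j = ∑ i ∈ univ.filter (fun i : Fin (n+1) => (i:ℕ) < (j:ℕ)), g i := fun j => rfl
    have hdiff : ∀ i : Fin (n+1), τ i * (u i - y i) = z i.succ - z i.castSucc := by
      intro i
      rw [hzval i.succ, hzval i.castSucc, Fin.val_succ, Fin.coe_castSucc,
        filter_succ_sum g i.val i.isLt]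
      simp [hg]
    have hzlast_sum : z (Fin.last (n+1)) = ∑ i : Fin (n+1), g i := by
      rw [hzval]
      congr 1
      rw [Fin.val_last]
      exact Finset.filter_true_of_mem (fun i _ => i.isLt)
    -- z last = 0 via constant perturbation
    have hT0 : (0:ℝ) < ∑ i : Fin (n+1), τ i :=
      Finset.sum_pos (fun i _ => hτ i) ⟨0, mem_univ 0⟩
    have hS0 : (∑ i : Fin (n+1), g i) = 0 := by
      have hkey : ∀ t : ℝ, |t| < 1 →
          0 ≤ (2 * ∑ i : Fin (n+1), g i) * t + (∑ i : Fin (n+1), τ i) * t ^ 2 := by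
        intro t _
        have h := hmin (fun i => u i + t)
        unfold tvF at h
        simp only at h
        have hq := quad_pert y τ u t (fun _ : Fin (n+1) => True)
        simp only [if_true, Finset.filter_true] at hq
        rw [hq] at h
        have htv : ∑ j : Fin n, |u j.succ + t - (u j.castSucc + t)|
            = ∑ j : Fin n, |u j.succ - u j.castSucc| := by
          refine Finset.sum_congr rfl fun j _ => ?_
          congr 1; ring
        rw [htv] at h
        simp only [hg]
        nlinarith [h]
      have := quadA hT0 one_pos hkey
      linarith
    have hzlast : z (Fin.last (n+1)) = 0 := by rw [hzlast_sum, hS0]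
    -- interior conditions
    have hint : ∀ k : Fin n, |z k.succ.castSucc| ≤ lam / 2 ∧
        (u k.succ ≠ u k.castSucc →
          z k.succ.castSucc = lam / 2 * Real.sign (u k.succ - u k.castSucc)) := by
      intro k
      set P : ℝ := ∑ i ∈ univ.filter (fun i : Fin (n+1) => (i:ℕ) < (k:ℕ)+1), g i with hP
      set T : ℝ := ∑ i ∈ univ.filter (fun i : Fin (n+1) => (i:ℕ) < (k:ℕ)+1), τ i with hT
      set D : ℝ := u k.succ - u k.castSucc with hD
      have hwP : z k.succ.castSucc = P := by
        rw [hzval]; rfl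
      have hTpos : 0 < T := by
        rw [hT]
        refine Finset.sum_pos (fun i _ => hτ i) ⟨⟨0, by omega⟩, ?_⟩
        simp
      have hkey : ∀ t : ℝ, 0 ≤ 2 * t * P + t ^ 2 * T + lam * (|D - t| - |D|) := by
        intro t
        have h := hmin (fun i => if (i:ℕ) < (k:ℕ)+1 then u i + t else u i)
        unfold tvF at h
        simp only at h
        rw [quad_pert y τ u t (fun i : Fin (n+1) => (i:ℕ) < (k:ℕ)+1), tv_pert u t k] at h
        rw [mul_add] at h
        rw [hP, hT, hD, hg]
        linarith
      constructor
      case _ =>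
        rcases lt_trichotomy D 0 with hd | hd | hd
        · have hA : ∀ t : ℝ, |t| < -D → 0 ≤ (2*P + lam) * t + T * t ^ 2 := by
            intro t ht
            have h := hkey t
            have e1 : |D - t| = -(D - t) := abs_of_neg (by
              have := abs_lt.mp ht; linarith)
            have e2 : |D| = -D := abs_of_neg hd
            rw [e1, e2] at h
            nlinarith [h]
          have := quadA hTpos (by linarith : (0:ℝ) < -D) hA
          rw [hwP]
          have : P = -(lam/2) := by linarith
          rw [this, abs_neg, abs_of_nonneg (by linarith)]
        · have h1 : ∀ t : ℝ, 0 < t → 0 ≤ (2*P + lam) * t + T * t ^ 2 := by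
            intro t ht
            have h := hkey t
            rw [hd] at h
            simp only [zero_sub, abs_neg, abs_zero, abs_of_pos ht, sub_zero] at h
            nlinarith [h]
          have h2 : ∀ t : ℝ, 0 < t → 0 ≤ (lam - 2*P) * t + T * t ^ 2 := by
            intro t ht
            have h := hkey (-t)
            rw [hd] at h
            simp only [zero_sub, neg_neg, abs_neg, abs_zero, abs_of_pos ht, sub_zero] at h
            nlinarith [h]
          have hb1 := quadB hTpos h1
          have hb2 := quadB hTpos h2
          rw [hwP, abs_le]
          constructor <;> linarith
        · have hA : ∀ t : ℝ, |t| < D → 0 ≤ (2*P - lam) * t + T * t ^ 2 := by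
            intro t ht
            have h := hkey t
            have e1 : |D - t| = D - t := abs_of_pos (by
              have := abs_lt.mp ht; linarith)
            have e2 : |D| = D := abs_of_pos hd
            rw [e1, e2] at h
            nlinarith [h]
          have := quadA hTpos hd hA
          rw [hwP]
          have : P = lam/2 := by linarith
          rw [this, abs_of_nonneg (by linarith)]
      case _ =>
        intro hne
        have hDne : D ≠ 0 := sub_ne_zero.mpr hne
        rcases lt_or_gt_of_ne hDne with hd | hd
        · have hA : ∀ t : ℝ, |t| < -D → 0 ≤ (2*P + lam) * t + T * t ^ 2 := by
            intro t ht
            have h := hkey t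
            have e1 : |D - t| = -(D - t) := abs_of_neg (by
              have := abs_lt.mp ht; linarith)
            have e2 : |D| = -D := abs_of_neg hd
            rw [e1, e2] at h
            nlinarith [h]
          have := quadA hTpos (by linarith : (0:ℝ) < -D) hA
          rw [hwP, Real.sign_of_neg hd]
          linarith
        · have hA : ∀ t : ℝ, |t| < D → 0 ≤ (2*P - lam) * t + T * t ^ 2 := by
            intro t ht
            have h := hkey t
            have e1 : |D - t| = D - t := abs_of_pos (by
              have := abs_lt.mp ht; linarith)
            have e2 : |D| = D := abs_of_pos hd
            rw [e1, e2] at h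
            nlinarith [h]
          have := quadA hTpos hd hA
          rw [hwP, Real.sign_of_pos hd]
          linarith
    exact ⟨z, hz0, hzlast, fun k => (hint k).1, fun k => (hint k).2, hdiff⟩
  · -- backward
    rintro ⟨z, hz0, hzl, hbd, hsg, hdf⟩ v
    have hquad : ∀ i : Fin (n+1),
        2 * ((z i.succ - z i.castSucc) * (v i - u i))
          ≤ τ i * (y i - v i) ^ 2 - τ i * (y i - u i) ^ 2 := by
      intro i
      rw [← hdf i]
      nlinarith [mul_nonneg (hτ i).le (sq_nonneg (v i - u i))]
    have htv2 : ∀ k : Fin n,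
        2 * (z k.succ.castSucc * ((v k.succ - u k.succ) - (v k.castSucc - u k.castSucc)))
          ≤ lam * |v k.succ - v k.castSucc| - lam * |u k.succ - u k.castSucc| := by
      intro k
      have h := tv_sub (e := v k.succ - v k.castSucc) hlam (hbd k) (fun hd => hsg k (sub_ne_zero.mp hd))
      nlinarith [h]
    have hs1 := Finset.sum_le_sum (fun i (_ : i ∈ univ) => hquad i)
    have hs2 := Finset.sum_le_sum (fun k (_ : k ∈ univ) => htv2 k)
    rw [Finset.sum_sub_distrib] at hs1
    rw [Finset.sum_sub_distrib, ← Finset.mul_sum, ← Finset.mul_sum] at hs2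
    rw [← Finset.mul_sum] at hs1 hs2
    have hab := abel_fin z (fun i => v i - u i) hz0 hzl
    unfold tvF
    nlinarith [hs1, hs2, hab]
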